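/- The function f(p) = Γ(0, −log(1−p))/(1−p) on (0,1) satisfies −f'(p) ≤ 1/(p(1−p)), and consequently for 0 < p ≤ q < 1, f(p) − f(q) ≤ (q−p)/(p(1−p)). -/

import Mathlib

open MeasureTheory Set Real

noncomputable def Gi (c : ℝ) : ℝ := ∫ t in Ioi c, Real.exp (-t) / t

lemma contOn (a : ℝ) (ha : 0 < a) :
    ContinuousOn (fun t : ℝ => Real.exp (-t) / t) (Ioi a) := by
  apply ContinuousOn.div
  · exact (Real.continuous_exp.comp continuous_neg).continuousOn
  · exact continuousOn_id
  · intro x hx; exact ne_of_gt (ha.trans hx)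

lemma integrableOn_Gi {a : ℝ} (ha : 0 < a) :
    IntegrableOn (fun t : ℝ => Real.exp (-t) / t) (Ioi a) := by
  have hg : IntegrableOn (fun t : ℝ => Real.exp (-t) / a) (Ioi a) := by
    have := (exp_neg_integrableOn_Ioi a (one_pos)).div_const a
    simp only [neg_mul, one_mul] at this
    exact this
  refine hg.mono' ((contOn a ha).aestronglyMeasurable measurableSet_Ioi) ?_
  filter_upwards [ae_restrict_mem measurableSet_Ioi] with t ht
  rw [Real.norm_eq_abs, abs_div, abs_of_pos (Real.exp_pos _), abs_of_pos (ha.trans ht)]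
  exact div_le_div_of_nonneg_left (Real.exp_pos _).le ha (le_of_lt ht)

lemma Gi_nonneg {a : ℝ} (ha : 0 < a) : 0 ≤ Gi a := by
  apply setIntegral_nonneg measurableSet_Ioi
  intro t ht
  exact div_nonneg (Real.exp_pos _).le (ha.trans ht).le

lemma Gi_split {a c : ℝ} (ha : 0 < a) (hac : a ≤ c) :
    Gi a = (∫ t in Ioc a c, Real.exp (-t) / t) + Gi c := by
  unfold Gi
  rw [← setIntegral_union ?_ measurableSet_Ioi ?_ ?_, Ioc_union_Ioi_eq_Ioi hac]
  · exact Ioc_disjoint_Ioi le_rfl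
  · exact (integrableOn_Gi ha).mono_set Ioc_subset_Ioi_self
  · exact integrableOn_Gi (ha.trans_le hac)

lemma hasDerivAt_Gi {c : ℝ} (hc : 0 < c) :
    HasDerivAt Gi (-(Real.exp (-c) / c)) c := by
  set a := c / 2 with ha_def
  have ha : 0 < a := by positivity
  have hac : a < c := by simp only [ha_def]; linarith
  have heq : ∀ x ∈ Ioi a, Gi x = Gi a - ∫ t in a..x, Real.exp (-t) / t := by
    intro x hx
    rw [intervalIntegral.integral_of_le (le_of_lt hx), Gi_split ha (le_of_lt hx)]
    ring
  have hint : IntervalIntegrable (fun t : ℝ => Real.exp (-t) / t) volume a c :=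
    (intervalIntegrable_iff_integrableOn_Ioc_of_le hac.le).2
      ((integrableOn_Gi ha).mono_set Ioc_subset_Ioi_self)
  have hmeas : StronglyMeasurableAtFilter (fun t : ℝ => Real.exp (-t) / t) (nhds c) :=
    ⟨Ioi a, Ioi_mem_nhds hac, (contOn a ha).aestronglyMeasurable measurableSet_Ioi⟩
  have hcont : ContinuousAt (fun t : ℝ => Real.exp (-t) / t) c :=
    ((Real.continuous_exp.comp continuous_neg).continuousAt).div continuousAt_id hc.ne'
  have hd := (intervalIntegral.integral_hasDerivAt_right hint hmeas hcont).const_sub (Gi a)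
  refine HasDerivAt.congr_of_eventuallyEq hd ?_
  filter_upwards [Ioi_mem_nhds hac] with x hx using heq x hx

theorem incomplete_gamma_fn_deriv_bound
    (f : ℝ → ℝ)
    (hf : ∀ p ∈ Ioo (0 : ℝ) 1,
      f p = (∫ t in Ioi (-Real.log (1 - p)), Real.exp (-t) / t) / (1 - p)) :
    (∀ p ∈ Ioo (0 : ℝ) 1, -deriv f p ≤ 1 / (p * (1 - p))) ∧
    (∀ p q : ℝ, 0 < p → p ≤ q → q < 1 → f p - f q ≤ (q - p) / (p * (1 - p))) := by
  have hf' : ∀ p ∈ Ioo (0 : ℝ) 1, f p = Gi (-Real.log (1 - p)) / (1 - p) := hf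
  constructor
  · intro p hp
    obtain ⟨hp0, hp1⟩ := hp
    have h1p : 0 < 1 - p := by linarith
    have h1p1 : 1 - p < 1 := by linarith
    have hcp : 0 < -Real.log (1 - p) := by
      have := Real.log_neg h1p h1p1; linarith
    have hcpp : p ≤ -Real.log (1 - p) := by
      have := Real.log_le_sub_one_of_pos h1p; linarith
    have hexp : Real.exp (-(-Real.log (1 - p))) = 1 - p := by
      rw [neg_neg, Real.exp_log h1p]
    have hlin : HasDerivAt (fun y : ℝ => 1 - y) (-1) p := by
      simpa using (hasDerivAt_id p).const_sub 1
    have hlog : HasDerivAt (fun y : ℝ => -Real.log (1 - y)) (1 / (1 - p)) p := by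
      have h := ((Real.hasDerivAt_log h1p.ne').comp p hlin).neg
      exact h.congr_deriv (by ring)
    have hc := (hasDerivAt_Gi hcp).comp p hlog
    have hd := hc.div hlin h1p.ne'
    have hfd : HasDerivAt f
        ((-(Real.exp (-(-Real.log (1 - p))) / (-Real.log (1 - p))) * (1 / (1 - p)) * (1 - p)
          - Gi (-Real.log (1 - p)) * (-1)) / (1 - p) ^ 2) p := by
      refine hd.congr_of_eventuallyEq ?_
      filter_upwards [isOpen_Ioo.mem_nhds ⟨hp0, hp1⟩] with x hx
      exact hf' x hx
    rw [hfd.deriv, hexp]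
    have hG : 0 ≤ Gi (-Real.log (1 - p)) := Gi_nonneg hcp
    set G := Gi (-Real.log (1 - p)) with hGdef
    set c := -Real.log (1 - p) with hcdef
    have hkey : -((-((1 - p) / c) * (1 / (1 - p)) * (1 - p) - G * (-1)) / (1 - p) ^ 2)
        = ((1 - p) / c - G) / (1 - p) ^ 2 := by
      field_simp
      ring
    rw [hkey]
    have h1 : (1 - p) / c ≤ (1 - p) / p := by gcongr <;> linarith
    have h2 : ((1 - p) / c - G) / (1 - p) ^ 2 ≤ ((1 - p) / p) / (1 - p) ^ 2 := by
      gcongr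
      linarith
    have h3 : ((1 - p) / p) / (1 - p) ^ 2 = 1 / (p * (1 - p)) := by
      field_simp
    linarith
  · intro p q hp0 hpq hq1
    have hp1 : p < 1 := lt_of_le_of_lt hpq hq1
    have hq0 : 0 < q := lt_of_lt_of_le hp0 hpq
    have h1p : 0 < 1 - p := by linarith
    have h1q : 0 < 1 - q := by linarith
    have hcp : 0 < -Real.log (1 - p) := by
      have := Real.log_neg h1p (by linarith); linarith
    have hcq0 : 0 < -Real.log (1 - q) := by
      have := Real.log_neg h1q (by linarith); linarith
    have hcpp : p ≤ -Real.log (1 - p) := by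
      have := Real.log_le_sub_one_of_pos h1p; linarith
    have hcpq : -Real.log (1 - p) ≤ -Real.log (1 - q) := by
      have := Real.log_le_log h1q (by linarith : 1 - q ≤ 1 - p)
      linarith
    set cp := -Real.log (1 - p) with hcpdef
    set cq := -Real.log (1 - q) with hcqdef
    have hexp_p : Real.exp (-cp) = 1 - p := by rw [hcpdef, neg_neg, Real.exp_log h1p]
    have hexp_q : Real.exp (-cq) = 1 - q := by rw [hcqdef, neg_neg, Real.exp_log h1q]
    rw [hf' p ⟨hp0, hp1⟩, hf' q ⟨hq0, hq1⟩]
    rw [show Gi (-Real.log (1 - p)) = (∫ t in Ioc cp cq, Real.exp (-t) / t) + Gi cq from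
      Gi_split hcp hcpq]
    set I := ∫ t in Ioc cp cq, Real.exp (-t) / t with hIdef
    have hI : I ≤ (q - p) / p := by
      have hIle : I ≤ ∫ t in Ioc cp cq, Real.exp (-t) / cp := by
        apply setIntegral_mono_on
        · exact (integrableOn_Gi hcp).mono_set Ioc_subset_Ioi_self
        · exact ((Real.continuous_exp.comp continuous_neg).div_const cp).integrableOn_Ioc
        · exact measurableSet_Ioc
        · intro t ht
          exact div_le_div_of_nonneg_left (Real.exp_pos _).le hcp ht.1.le
      have hIexp : ∫ t in Ioc cp cq, Real.exp (-t) / cp = (q - p) / cp := by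
        rw [integral_div, ← intervalIntegral.integral_of_le hcpq]
        rw [show (∫ t in cp..cq, Real.exp (-t)) = ∫ t in -cq..(-cp), Real.exp t from
          intervalIntegral.integral_comp_neg (fun x => Real.exp x)]
        rw [integral_exp, hexp_p, hexp_q]
        ring
      have hcdiv : (q - p) / cp ≤ (q - p) / p := by
        gcongr <;> linarith
      calc I ≤ ∫ t in Ioc cp cq, Real.exp (-t) / cp := hIle
        _ = (q - p) / cp := hIexp
        _ ≤ (q - p) / p := hcdiv
    have hGq : 0 ≤ Gi cq := Gi_nonneg hcq0
    have hmono : Gi cq / (1 - p) ≤ Gi cq / (1 - q) := by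
      gcongr <;> linarith
    have : (I + Gi cq) / (1 - p) - Gi cq / (1 - q) ≤ I / (1 - p) := by
      rw [add_div]
      linarith
    have hfinal : I / (1 - p) ≤ ((q - p) / p) / (1 - p) := by gcongr
    have heq : ((q - p) / p) / (1 - p) = (q - p) / (p * (1 - p)) := by
      rw [div_div]
    linarith
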